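/- Let λ ≥ 1. If a basis is C_ℓ-suppression quasi-greedy and Δ-(λ, RPSLC), then it is C_ℓΔ-(λ, RPGII); that is, ‖x − P_Λ(x)‖ ≤ C_ℓΔ·σ̌^Λ_m(x) for all x, m, and greedy sets Λ of x with |Λ| = ⌈λm⌉. -/

import Mathlib

open Finset Filter

noncomputable section

variable {X : Type*} [NormedAddCommGroup X] [NormedSpace ℝ X]

/-- Projection `P_A x = ∑_{n ∈ A} e_n^*(x) e_n`. -/
def proj (f : ℕ → X →L[ℝ] ℝ) (e : ℕ → X) (A : Finset ℕ) (x : X) : X :=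
  ∑ n ∈ A, f n x • e n

/-- `Λ` is a greedy set of `x`. -/
def GreedySet (f : ℕ → X →L[ℝ] ℝ) (x : X) (Λ : Finset ℕ) : Prop :=
  ∀ n ∈ Λ, ∀ m, m ∉ Λ → |f m x| ≤ |f n x|

/-- A (biorthogonal, norm-bounded, fundamental) basis system. -/
structure BasisSystem (f : ℕ → X →L[ℝ] ℝ) (e : ℕ → X) : Prop where
  biorth : ∀ n m, f n (e m) = if n = m then (1 : ℝ) else 0
  dense : Dense (Submodule.span ℝ (Set.range e) : Set X)
  bounded : ∃ c₁ c₂ : ℝ, 0 < c₁ ∧ ∀ n, c₁ ≤ ‖e n‖ ∧ ‖e n‖ ≤ c₂ ∧ ‖f n‖ ≤ c₂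

/-- `σ̌^Λ_m(x)`: inf of `‖x - P_I x‖` over `I = ∅` or intervals `I` with
`Λ ≤ max I` and `|I| ≤ m`. -/
def checkSigma (f : ℕ → X →L[ℝ] ℝ) (e : ℕ → X) (Λ : Finset ℕ) (m : ℕ) (x : X) : ℝ :=
  sInf {r : ℝ | ∃ I : Finset ℕ,
    (I = ∅ ∨ ∃ a b : ℕ, a ≤ b ∧ I = Finset.Icc a b ∧ ∀ n ∈ Λ, n ≤ b) ∧
    I.card ≤ m ∧ r = ‖x - proj f e I x‖}

/-- `σ̂^Λ_m(x)`: inf of `‖x - P_I x‖` over `I = ∅` or intervals `I` with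
`min I ≤ Λ` and `|I| ≤ m`. -/
def hatSigma (f : ℕ → X →L[ℝ] ℝ) (e : ℕ → X) (Λ : Finset ℕ) (m : ℕ) (x : X) : ℝ :=
  sInf {r : ℝ | ∃ I : Finset ℕ,
    (I = ∅ ∨ ∃ a b : ℕ, a ≤ b ∧ I = Finset.Icc a b ∧ ∀ n ∈ Λ, a ≤ n) ∧
    I.card ≤ m ∧ r = ‖x - proj f e I x‖}

/-- `σ̃^{R,Λ}_m(x)`: inf of `‖x - P_A x‖` over `|A| ≤ m`, `A > Λ`. -/
def revSigma (f : ℕ → X →L[ℝ] ℝ) (e : ℕ → X) (Λ : Finset ℕ) (m : ℕ) (x : X) : ℝ :=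
  sInf {r : ℝ | ∃ A : Finset ℕ, A.card ≤ m ∧ (∀ n ∈ Λ, ∀ a ∈ A, n < a) ∧
    r = ‖x - proj f e A x‖}

/-- Reverse partially greedy with constant `C`. -/
def RPG (f : ℕ → X →L[ℝ] ℝ) (e : ℕ → X) (C : ℝ) : Prop :=
  ∀ (x : X) (m : ℕ) (Λ : Finset ℕ), Λ.card = m → GreedySet f x Λ →
    ‖x - proj f e Λ x‖ ≤ C * revSigma f e Λ m x

/-- `(λ, RPGII)` with constant `C`. -/
def RPGII (f : ℕ → X →L[ℝ] ℝ) (e : ℕ → X) (l C : ℝ) : Prop :=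
  ∀ (x : X) (m : ℕ) (Λ : Finset ℕ), Λ.card = ⌈l * (m : ℝ)⌉₊ → GreedySet f x Λ →
    ‖x - proj f e Λ x‖ ≤ C * checkSigma f e Λ m x

/-- Quasi-greedy with constant `C`. -/
def QG (f : ℕ → X →L[ℝ] ℝ) (e : ℕ → X) (C : ℝ) : Prop :=
  ∀ (x : X) (Λ : Finset ℕ), GreedySet f x Λ → ‖proj f e Λ x‖ ≤ C * ‖x‖

/-- Suppression quasi-greedy with constant `C`. -/
def SuppQG (f : ℕ → X →L[ℝ] ℝ) (e : ℕ → X) (C : ℝ) : Prop :=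
  ∀ (x : X) (Λ : Finset ℕ), GreedySet f x Λ → ‖x - proj f e Λ x‖ ≤ C * ‖x‖

/-- Reverse conservative with constant `C`. -/
def RevConservative (e : ℕ → X) (C : ℝ) : Prop :=
  ∀ A B : Finset ℕ, (∀ b ∈ B, ∀ a ∈ A, b < a) → A.card ≤ B.card →
    ‖∑ n ∈ A, e n‖ ≤ C * ‖∑ n ∈ B, e n‖

/-- `s(A) = max A - min A + 1` (and `s(∅) = 0`). -/
def spread (A : Finset ℕ) : ℕ :=
  if h : A.Nonempty then A.max' h - A.min' h + 1 else 0

/-- `(λ, reverse conservative of type II)` with constant `C`. -/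
def RevConsII (e : ℕ → X) (l C : ℝ) : Prop :=
  ∀ A B : Finset ℕ, (l - 1) * spread A + (A.card : ℝ) ≤ (B.card : ℝ) →
    (∀ b ∈ B, ∀ a ∈ A, b < a) → ‖∑ n ∈ A, e n‖ ≤ C * ‖∑ n ∈ B, e n‖

/-- `x` surrounds `A`: `supp x ∩ [min A, max A] = ∅` (vacuous for `A = ∅`). -/
def Surrounds (f : ℕ → X →L[ℝ] ℝ) (x : X) (A : Finset ℕ) : Prop :=
  ∀ a ∈ A, ∀ b ∈ A, ∀ n, a ≤ n → n ≤ b → f n x = 0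

/-- `(λ, RPSLC)` with constant `Δ`. -/
def RPSLC (f : ℕ → X →L[ℝ] ℝ) (e : ℕ → X) (l Δ : ℝ) : Prop :=
  ∀ x : X, (∀ n, |f n x| ≤ 1) →
    ∀ ε δ : ℕ → ℝ, (∀ n, |ε n| = 1) → (∀ n, |δ n| = 1) →
    ∀ A B : Finset ℕ, (l - 1) * spread A + (A.card : ℝ) ≤ (B.card : ℝ) →
    (∀ n ∈ B, f n x = 0) → (∀ b ∈ B, ∀ a ∈ A, b < a) → Surrounds f x A →
    ‖x + ∑ n ∈ A, ε n • e n‖ ≤ Δ * ‖x + ∑ n ∈ B, δ n • e n‖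

/- ---------------- Auxiliary lemmas ---------------- -/

private lemma greedy_empty (f : ℕ → X →L[ℝ] ℝ) (x : X) : GreedySet f x ∅ := by
  intro n hn
  exact absurd hn (Finset.notMem_empty n)

private lemma proj_coeff (f : ℕ → X →L[ℝ] ℝ) (e : ℕ → X)
    (hbi : ∀ n m, f n (e m) = if n = m then (1:ℝ) else 0)
    (A : Finset ℕ) (x : X) (n : ℕ) :
    f n (proj f e A x) = if n ∈ A then f n x else 0 := by
  unfold proj
  rw [map_sum]
  have hterm : ∀ k ∈ A, f n (f k x • e k) = if k = n then f k x else 0 := by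
    intro k _
    rw [map_smul, smul_eq_mul, hbi]
    by_cases h : n = k
    · subst h; simp
    · have h' : k ≠ n := fun hh => h hh.symm
      simp [h, h']
  rw [Finset.sum_congr rfl hterm, Finset.sum_ite_eq' A n (fun k => f k x)]

private lemma suppqg_one_le (f : ℕ → X →L[ℝ] ℝ) (e : ℕ → X) (hb : BasisSystem f e)
    (Cl : ℝ) (hs : SuppQG f e Cl) : 1 ≤ Cl := by
  obtain ⟨c₁, c₂, hc₁, hbd⟩ := hb.bounded
  have he : 0 < ‖e 0‖ := lt_of_lt_of_le hc₁ (hbd 0).1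
  have h := hs (e 0) ∅ (greedy_empty f (e 0))
  simp only [proj, Finset.sum_empty, sub_zero] at h
  nlinarith

private lemma rpslc_one_le (f : ℕ → X →L[ℝ] ℝ) (e : ℕ → X) (hb : BasisSystem f e)
    (l Δ : ℝ) (h : RPSLC f e l Δ) : 1 ≤ Δ := by
  obtain ⟨c₁, c₂, hc₁, hbd⟩ := hb.bounded
  have he : 0 < ‖e 0‖ := lt_of_lt_of_le hc₁ (hbd 0).1
  have hco : ∀ n, |f n (e 0)| ≤ 1 := by
    intro n
    rw [hb.biorth]
    split <;> norm_num
  have hsp : spread (∅ : Finset ℕ) = 0 := by simp [spread]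
  have h0 := h (e 0) hco (fun _ => 1) (fun _ => 1) (fun _ => abs_one) (fun _ => abs_one)
    ∅ ∅ (by simp [hsp]) (by simp) (by simp)
    (fun a ha => absurd ha (Finset.notMem_empty a))
  simp only [Finset.sum_empty, add_zero] at h0
  nlinarith

/-- Cube convexity: if all sign-vertices are bounded by `M`, so is any point of the cube. -/
private lemma cube_lemma (e : ℕ → X) (α M : ℝ) (hα : 0 < α) (D : Finset ℕ) :
    ∀ (v : X) (c : ℕ → ℝ),
      (∀ ε : ℕ → ℝ, (∀ n, |ε n| = 1) → ‖v + ∑ n ∈ D, (α * ε n) • e n‖ ≤ M) →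
      (∀ n ∈ D, |c n| ≤ α) → ‖v + ∑ n ∈ D, (c n) • e n‖ ≤ M := by
  induction D using Finset.induction_on with
  | empty =>
    intro v c hM _
    simpa using hM (fun _ => 1) (fun _ => abs_one)
  | @insert a D ha IH =>
    intro v c hM hc
    have hαne : α ≠ 0 := ne_of_gt hα
    have hca := hc a (Finset.mem_insert_self a D)
    have hca' := abs_le.mp hca
    set θ := (c a + α) / (2 * α) with hθdef
    have h2α : (0:ℝ) < 2 * α := by linarith
    have hθ0 : 0 ≤ θ := div_nonneg (by linarith [hca'.1]) (le_of_lt h2α)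
    have hθ1 : θ ≤ 1 := by
      rw [hθdef, div_le_one h2α]
      linarith [hca'.2]
    have hM₁ : ∀ s : ℝ, |s| = 1 → ∀ ε : ℕ → ℝ, (∀ n, |ε n| = 1) →
        ‖(v + (α * s) • e a) + ∑ n ∈ D, (α * ε n) • e n‖ ≤ M := by
      intro s hsa ε hε
      have h1 := hM (Function.update ε a s) (fun n => by
        rcases eq_or_ne n a with rfl | hna
        · simpa using hsa
        · rw [Function.update_of_ne hna]; exact hε n)
      rw [Finset.sum_insert ha, Function.update_self] at h1
      have hsum : ∑ n ∈ D, (α * Function.update ε a s n) • e n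
          = ∑ n ∈ D, (α * ε n) • e n := by
        apply Finset.sum_congr rfl
        intro n hn
        rw [Function.update_of_ne (by rintro rfl; exact ha hn)]
      rw [hsum] at h1
      calc ‖(v + (α * s) • e a) + ∑ n ∈ D, (α * ε n) • e n‖
          = ‖v + ((α * s) • e a + ∑ n ∈ D, (α * ε n) • e n)‖ := by rw [add_assoc]
        _ ≤ M := h1
    have hc' : ∀ n ∈ D, |c n| ≤ α := fun n hn => hc n (Finset.mem_insert_of_mem hn)
    have hA : ‖(v + (α * (1:ℝ)) • e a) + ∑ n ∈ D, (c n) • e n‖ ≤ M :=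
      IH (v + (α * (1:ℝ)) • e a) c (hM₁ 1 abs_one) hc'
    have hB : ‖(v + (α * (-1:ℝ)) • e a) + ∑ n ∈ D, (c n) • e n‖ ≤ M :=
      IH (v + (α * (-1:ℝ)) • e a) c (hM₁ (-1) (by norm_num)) hc'
    have key : v + ∑ n ∈ insert a D, (c n) • e n
        = θ • ((v + (α * (1:ℝ)) • e a) + ∑ n ∈ D, (c n) • e n)
          + (1 - θ) • ((v + (α * (-1:ℝ)) • e a) + ∑ n ∈ D, (c n) • e n) := by
      rw [Finset.sum_insert ha]
      match_scalars
      · ring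
      · rw [hθdef]; field_simp; ring
      · ring
    rw [key]
    have hMnn : 0 ≤ M := le_trans (norm_nonneg _) hA
    calc ‖θ • ((v + (α * (1:ℝ)) • e a) + ∑ n ∈ D, (c n) • e n)
          + (1 - θ) • ((v + (α * (-1:ℝ)) • e a) + ∑ n ∈ D, (c n) • e n)‖
        ≤ ‖θ • ((v + (α * (1:ℝ)) • e a) + ∑ n ∈ D, (c n) • e n)‖
          + ‖(1 - θ) • ((v + (α * (-1:ℝ)) • e a) + ∑ n ∈ D, (c n) • e n)‖ :=
          norm_add_le _ _
      _ = θ * ‖(v + (α * (1:ℝ)) • e a) + ∑ n ∈ D, (c n) • e n‖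
          + (1 - θ) * ‖(v + (α * (-1:ℝ)) • e a) + ∑ n ∈ D, (c n) • e n‖ := by
          rw [norm_smul, norm_smul, Real.norm_eq_abs, Real.norm_eq_abs,
            abs_of_nonneg hθ0, abs_of_nonneg (by linarith)]
      _ ≤ θ * M + (1 - θ) * M := by
          apply add_le_add
          · exact mul_le_mul_of_nonneg_left hA hθ0
          · exact mul_le_mul_of_nonneg_left hB (by linarith)
      _ = M := by ring

/-- Convex combination of greedy suppressions: the truncation-type bound. -/
private lemma conv_lemma (f : ℕ → X →L[ℝ] ℝ) (e : ℕ → X) (Cl : ℝ)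
    (hs : SuppQG f e Cl) (y : X) (α : ℝ) (hα : 0 < α) :
    ∀ (k : ℕ) (S T : Finset ℕ) (γ : ℝ), S.card = k → Disjoint S T →
      (∀ n ∈ S, α ≤ |f n y|) →
      (∀ t ∈ T, ∀ s ∈ S, |f s y| ≤ |f t y|) →
      (∀ m, m ∉ S → m ∉ T → ∀ n ∈ S ∪ T, |f m y| ≤ |f n y|) →
      0 ≤ γ → γ ≤ 1 → (∀ n ∈ S, γ * |f n y| ≤ α) →
      ‖(y - proj f e (S ∪ T) y + ∑ n ∈ S, (α * Real.sign (f n y)) • e n)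
        - γ • (y - proj f e T y)‖ ≤ (1 - γ) * (Cl * ‖y‖) := by
  intro k
  induction k with
  | zero =>
    intro S T γ hScard hdis h1 hG hO hγ0 hγ1 hγS
    obtain rfl : S = ∅ := Finset.card_eq_zero.mp hScard
    have hgr : GreedySet f y T := by
      intro n hn m hm
      exact hO m (Finset.notMem_empty m) hm n (by simpa using hn)
    have hbnd := hs y T hgr
    simp only [Finset.empty_union, Finset.sum_empty, add_zero]
    have hid : y - proj f e T y - γ • (y - proj f e T y)
        = (1 - γ) • (y - proj f e T y) := by
      rw [sub_smul, one_smul]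
    rw [hid, norm_smul, Real.norm_eq_abs, abs_of_nonneg (by linarith)]
    exact mul_le_mul_of_nonneg_left hbnd (by linarith)
  | succ k IH =>
    intro S T γ hScard hdis h1 hG hO hγ0 hγ1 hγS
    have hSne : S.Nonempty := Finset.card_pos.mp (by omega)
    obtain ⟨n₀, hn₀S, hmax⟩ := S.exists_max_image (fun n => |f n y|) hSne
    have hαb : α ≤ |f n₀ y| := h1 n₀ hn₀S
    have hb0 : 0 < |f n₀ y| := lt_of_lt_of_le hα hαb
    set θ := α / |f n₀ y| with hθdef
    have hθ0 : 0 ≤ θ := div_nonneg (le_of_lt hα) (le_of_lt hb0)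
    have hθ1 : θ ≤ 1 := (div_le_one hb0).mpr hαb
    have hγθ : γ ≤ θ := by
      rw [hθdef, le_div_iff₀ hb0]
      exact hγS n₀ hn₀S
    set S' := S.erase n₀ with hS'def
    have hn₀T : n₀ ∉ T := Finset.disjoint_left.mp hdis hn₀S
    set T' := insert n₀ T with hT'def
    have hS'card : S'.card = k := by
      rw [hS'def, Finset.card_erase_of_mem hn₀S, hScard]
      omega
    have hST : S' ∪ T' = S ∪ T := by
      rw [hT'def, hS'def, Finset.union_insert, ← Finset.insert_union,
        Finset.insert_erase hn₀S]
    have hdis' : Disjoint S' T' := by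
      rw [hT'def, Finset.disjoint_insert_right]
      exact ⟨Finset.notMem_erase n₀ S,
        Finset.disjoint_of_subset_left (Finset.erase_subset n₀ S) hdis⟩
    have hG' : ∀ t ∈ T', ∀ s ∈ S', |f s y| ≤ |f t y| := by
      intro t ht s hsS'
      rcases Finset.mem_insert.mp ht with rfl | htT
      · exact hmax s (Finset.mem_of_mem_erase hsS')
      · exact hG t htT s (Finset.mem_of_mem_erase hsS')
    have hO' : ∀ m, m ∉ S' → m ∉ T' → ∀ n ∈ S' ∪ T', |f m y| ≤ |f n y| := by
      intro m hm1 hm2 n hn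
      have hmn₀ : m ≠ n₀ := fun hmn => hm2 (hmn ▸ Finset.mem_insert_self _ _)
      have hmS : m ∉ S := fun hmem => hm1 (Finset.mem_erase.mpr ⟨hmn₀, hmem⟩)
      have hmT : m ∉ T := fun hmem => hm2 (Finset.mem_insert_of_mem hmem)
      exact hO m hmS hmT n (hST ▸ hn)
    have hθS' : ∀ n ∈ S', θ * |f n y| ≤ α := by
      intro n hn
      calc θ * |f n y| ≤ θ * |f n₀ y| :=
            mul_le_mul_of_nonneg_left (hmax n (Finset.mem_of_mem_erase hn)) hθ0
        _ = α := div_mul_cancel₀ α (ne_of_gt hb0)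
    have IH1 := IH S' T' θ hS'card hdis'
      (fun n hn => h1 n (Finset.mem_of_mem_erase hn)) hG' hO' hθ0 hθ1 hθS'
    have hgrT : GreedySet f y T := by
      intro n hn m hm
      by_cases hmS : m ∈ S
      · exact hG n hn m hmS
      · exact hO m hmS hm n (Finset.mem_union_right _ hn)
    have hv₀ := hs y T hgrT
    have hsplit : ∑ n ∈ S, (α * Real.sign (f n y)) • e n
        = (α * Real.sign (f n₀ y)) • e n₀
          + ∑ n ∈ S', (α * Real.sign (f n y)) • e n :=
      (Finset.add_sum_erase S (fun n => (α * Real.sign (f n y)) • e n) hn₀S).symm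
    have hprojT' : proj f e T' y = (f n₀ y) • e n₀ + proj f e T y := by
      simp only [proj, hT'def]
      exact Finset.sum_insert hn₀T
    have hprojU : proj f e (S' ∪ T') y = proj f e (S ∪ T) y := by rw [hST]
    have hc0ne : f n₀ y ≠ 0 := by
      intro h0
      rw [h0, abs_zero] at hb0
      exact lt_irrefl _ hb0
    have hsc : α * Real.sign (f n₀ y) = θ * f n₀ y := by
      rcases lt_or_gt_of_ne hc0ne with hneg | hpos
      · rw [Real.sign_of_neg hneg, hθdef, abs_of_neg hneg]
        field_simp
      · rw [Real.sign_of_pos hpos, hθdef, abs_of_pos hpos]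
        field_simp
    have hkey : (y - proj f e (S ∪ T) y + ∑ n ∈ S, (α * Real.sign (f n y)) • e n)
          - γ • (y - proj f e T y)
        = ((y - proj f e (S' ∪ T') y + ∑ n ∈ S', (α * Real.sign (f n y)) • e n)
            - θ • (y - proj f e T' y))
          + (θ - γ) • (y - proj f e T y) := by
      rw [hprojU, hsplit, hprojT', hsc]
      module
    rw [hkey]
    calc ‖((y - proj f e (S' ∪ T') y + ∑ n ∈ S', (α * Real.sign (f n y)) • e n)
            - θ • (y - proj f e T' y))
          + (θ - γ) • (y - proj f e T y)‖
        ≤ ‖(y - proj f e (S' ∪ T') y + ∑ n ∈ S', (α * Real.sign (f n y)) • e n)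
            - θ • (y - proj f e T' y)‖
          + ‖(θ - γ) • (y - proj f e T y)‖ := norm_add_le _ _
      _ ≤ (1 - θ) * (Cl * ‖y‖) + (θ - γ) * (Cl * ‖y‖) := by
          apply add_le_add IH1
          rw [norm_smul, Real.norm_eq_abs, abs_of_nonneg (by linarith)]
          exact mul_le_mul_of_nonneg_left hv₀ (by linarith)
      _ = (1 - γ) * (Cl * ‖y‖) := by ring

/-- suppression quasi-greedy + `Δ`-(λ, RPSLC) implies
`C_ℓ Δ`-(λ, RPGII). -/
theorem stmt_8 [CompleteSpace X] (f : ℕ → X →L[ℝ] ℝ) (e : ℕ → X)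
    (hb : BasisSystem f e) (l Cl Δ : ℝ) (hl : 1 ≤ l) (hs : SuppQG f e Cl)
    (h : RPSLC f e l Δ) : RPGII f e l (Cl * Δ) := by
  have hCl : 1 ≤ Cl := suppqg_one_le f e hb Cl hs
  have hΔ : 1 ≤ Δ := rpslc_one_le f e hb l Δ h
  intro x m Λ hΛcard hgr
  have key : ∀ r ∈ {r : ℝ | ∃ I : Finset ℕ,
      (I = ∅ ∨ ∃ a b : ℕ, a ≤ b ∧ I = Finset.Icc a b ∧ ∀ n ∈ Λ, n ≤ b) ∧
      I.card ≤ m ∧ r = ‖x - proj f e I x‖},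
      ‖x - proj f e Λ x‖ ≤ (Cl * Δ) * r := by
    rintro r ⟨I, hI, hIm, rfl⟩
    rcases hI with rfl | ⟨a, b, hab, rfl, hΛb⟩
    · -- I = ∅
      have hpe : proj f e (∅ : Finset ℕ) x = 0 := Finset.sum_empty
      rw [hpe, sub_zero]
      have h1 := hs x Λ hgr
      nlinarith [norm_nonneg x, mul_nonneg (mul_nonneg
        (by linarith : (0:ℝ) ≤ Δ - 1) (by linarith : (0:ℝ) ≤ Cl)) (norm_nonneg x)]
    · set I := Finset.Icc a b with hIdef
      set y := x - proj f e I x with hy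
      rcases Finset.eq_empty_or_nonempty Λ with rfl | hΛne
      · exfalso
        have hceil : ⌈l * (m:ℝ)⌉₊ = 0 := by
          rw [← hΛcard]; simp
        have hmle : m ≤ ⌈l * (m:ℝ)⌉₊ := by
          calc m = ⌈(m:ℝ)⌉₊ := (Nat.ceil_natCast m).symm
            _ ≤ ⌈l * (m:ℝ)⌉₊ := Nat.ceil_le_ceil
                (by nlinarith [mul_le_mul_of_nonneg_right hl (Nat.cast_nonneg (α := ℝ) m)])
        have hIcard : 1 ≤ I.card := by
          rw [hIdef, Nat.card_Icc]; omega
        omega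
      · set α := Λ.inf' hΛne (fun n => |f n x|) with hαdef
        have hαin : ∀ n ∈ Λ, α ≤ |f n x| := fun n hn => Finset.inf'_le _ hn
        have hαout : ∀ k, k ∉ Λ → |f k x| ≤ α := by
          intro k hk
          apply Finset.le_inf'
          intro n hn
          exact hgr n hn k hk
        have hα0 : 0 ≤ α := Finset.le_inf' hΛne _ (fun n _ => abs_nonneg _)
        set D := I \ Λ with hDdef
        set S := Λ \ I with hSdef
        set z := x - proj f e (Λ ∪ I) x with hz
        have hyc : ∀ n, f n y = if n ∈ I then 0 else f n x := by
          intro n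
          rw [hy, map_sub, proj_coeff f e hb.biorth]
          split <;> simp
        have hzc : ∀ n, f n z = if n ∈ Λ ∪ I then 0 else f n x := by
          intro n
          rw [hz, map_sub, proj_coeff f e hb.biorth]
          split <;> simp
        have hIS : I ∪ S = Λ ∪ I := by
          rw [hSdef, Finset.union_sdiff_self_eq_union, Finset.union_comm]
        have hzy : z = y - proj f e S y := by
          have h1 : proj f e S y = proj f e S x := by
            unfold proj
            apply Finset.sum_congr rfl
            intro n hn
            rw [hyc n, if_neg ((Finset.mem_sdiff.mp hn).2)]
          have h2 : proj f e (Λ ∪ I) x = proj f e I x + proj f e S x := by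
            rw [← hIS]
            unfold proj
            exact Finset.sum_union Finset.disjoint_sdiff
          rw [hz, h2, h1, hy]
          abel
        have hxsplit : x - proj f e Λ x = z + ∑ n ∈ D, (f n x) • e n := by
          have hLD : Λ ∪ D = Λ ∪ I := by
            rw [hDdef, Finset.union_sdiff_self_eq_union]
          have h2 : proj f e (Λ ∪ I) x = proj f e Λ x + proj f e D x := by
            rw [← hLD]
            unfold proj
            exact Finset.sum_union Finset.disjoint_sdiff
          have h3 : proj f e D x = ∑ n ∈ D, (f n x) • e n := rfl
          rw [hz, h2, h3]
          abel
        rcases eq_or_lt_of_le hα0 with hα0' | hαpos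
        · -- α = 0
          have hD0 : ∑ n ∈ D, (f n x) • e n = 0 := by
            apply Finset.sum_eq_zero
            intro n hn
            have h1 := hαout n (Finset.mem_sdiff.mp hn).2
            rw [← hα0'] at h1
            have h2 : f n x = 0 := abs_eq_zero.mp (le_antisymm h1 (abs_nonneg _))
            rw [h2, zero_smul]
          have heq : x - proj f e Λ x = y - proj f e S y := by
            rw [hxsplit, hD0, add_zero, hzy]
          rw [heq]
          have hgrS : GreedySet f y S := by
            intro n hn k hk
            rw [hyc k]
            split
            · simpa using abs_nonneg (f n y)
            · rename_i hkI
              have hkΛ : k ∉ Λ := fun hkΛ => hk (Finset.mem_sdiff.mpr ⟨hkΛ, hkI⟩)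
              have h1 := hαout k hkΛ
              rw [← hα0'] at h1
              have h2 : f k x = 0 := abs_eq_zero.mp (le_antisymm h1 (abs_nonneg _))
              rw [h2]
              simpa using abs_nonneg (f n y)
          have h1 := hs y S hgrS
          nlinarith [norm_nonneg y, mul_nonneg (mul_nonneg
        (by linarith : (0:ℝ) ≤ Δ - 1) (by linarith : (0:ℝ) ≤ Cl)) (norm_nonneg y)]
        · -- 0 < α
          set δ : ℕ → ℝ := fun n => if f n y < 0 then -1 else 1 with hδdef
          have hδ1 : ∀ n, |δ n| = 1 := by
            intro n
            by_cases hc : f n y < 0 <;> simp [hδdef, hc]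
          set M := Δ * ‖z + ∑ n ∈ S, (α * δ n) • e n‖ with hMdef
          have hzb : ∀ n, |f n z| ≤ α := by
            intro n
            rw [hzc n]
            split
            · simpa using hα0
            · rename_i hnmem
              exact hαout n (fun hnΛ => hnmem (Finset.mem_union_left _ hnΛ))
          have hMbound : ∀ ε : ℕ → ℝ, (∀ n, |ε n| = 1) →
              ‖z + ∑ n ∈ D, (α * ε n) • e n‖ ≤ M := by
            intro ε hε
            have hx0 : ∀ n, |f n (α⁻¹ • z)| ≤ 1 := by
              intro n
              rw [map_smul, smul_eq_mul, abs_mul, abs_inv, abs_of_pos hαpos]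
              calc α⁻¹ * |f n z| ≤ α⁻¹ * α := by
                    apply mul_le_mul_of_nonneg_left (hzb n) (le_of_lt (inv_pos.mpr hαpos))
                _ = 1 := inv_mul_cancel₀ (ne_of_gt hαpos)
            have hcard : (l - 1) * (spread D : ℝ) + (D.card : ℝ) ≤ (S.card : ℝ) := by
              have h1 : D.card + (I ∩ Λ).card = I.card :=
                Finset.card_sdiff_add_card_inter I Λ
              have h2 : S.card + (Λ ∩ I).card = Λ.card :=
                Finset.card_sdiff_add_card_inter Λ I
              have h3 : (Λ ∩ I).card = (I ∩ Λ).card := by rw [Finset.inter_comm]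
              have h4 : spread D ≤ I.card := by
                rcases Finset.eq_empty_or_nonempty D with hDe | hDne
                · rw [hDe]
                  simp [spread]
                · have hmax := Finset.max'_mem D hDne
                  have hmin := Finset.min'_mem D hDne
                  have h5 : D.max' hDne ≤ b :=
                    (Finset.mem_Icc.mp ((Finset.mem_sdiff.mp hmax).1)).2
                  have h6 : a ≤ D.min' hDne :=
                    (Finset.mem_Icc.mp ((Finset.mem_sdiff.mp hmin).1)).1
                  rw [spread, dif_pos hDne, hIdef, Nat.card_Icc]
                  omega
              have h5 : I.card ≤ m := hIm
              have h7 : l * (m:ℝ) ≤ (⌈l * (m:ℝ)⌉₊ : ℝ) := Nat.le_ceil _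
              have h8 : ((spread D : ℕ) : ℝ) ≤ (m:ℝ) := by
                exact_mod_cast le_trans h4 h5
              have h9 : (D.card:ℝ) + ((I ∩ Λ).card:ℝ) = (I.card:ℝ) := by exact_mod_cast h1
              have h10 : (S.card:ℝ) + ((I ∩ Λ).card:ℝ) = (Λ.card:ℝ) := by
                rw [← h3]; exact_mod_cast h2
              have h11 : (Λ.card:ℝ) = (⌈l * (m:ℝ)⌉₊ : ℝ) := by rw [hΛcard]
              have h12 : (I.card:ℝ) ≤ (m:ℝ) := by exact_mod_cast h5
              have h13 : (l - 1) * (spread D : ℝ) ≤ (l - 1) * (m:ℝ) :=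
                mul_le_mul_of_nonneg_left h8 (by linarith)
              nlinarith
            have hBsupp : ∀ n ∈ S, f n (α⁻¹ • z) = 0 := by
              intro n hn
              rw [map_smul, smul_eq_mul]
              have h1 : f n z = 0 := by
                rw [hzc n, if_pos (Finset.mem_union_left _ (Finset.mem_sdiff.mp hn).1)]
              rw [h1, mul_zero]
            have hBA : ∀ s ∈ S, ∀ d ∈ D, s < d := by
              intro s hsS d hdD
              obtain ⟨hsΛ, hsI⟩ := Finset.mem_sdiff.mp hsS
              have hsb : s ≤ b := hΛb s hsΛ
              have hsa : s < a := by
                by_contra hcon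
                push_neg at hcon
                exact hsI (Finset.mem_Icc.mpr ⟨hcon, hsb⟩)
              have had : a ≤ d := (Finset.mem_Icc.mp (Finset.mem_sdiff.mp hdD).1).1
              omega
            have hsur : Surrounds f (α⁻¹ • z) D := by
              intro p hp q hq n hpn hnq
              rw [map_smul, smul_eq_mul]
              have hpI : a ≤ p := (Finset.mem_Icc.mp (Finset.mem_sdiff.mp hp).1).1
              have hqI : q ≤ b := (Finset.mem_Icc.mp (Finset.mem_sdiff.mp hq).1).2
              have hn' : n ∈ Λ ∪ I :=
                Finset.mem_union_right _ (Finset.mem_Icc.mpr ⟨by omega, by omega⟩)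
              rw [hzc n, if_pos hn', mul_zero]
            have hrp := h (α⁻¹ • z) hx0 ε δ hε hδ1 D S hcard hBsupp hBA hsur
            have hsc1 : z + ∑ n ∈ D, (α * ε n) • e n
                = α • (α⁻¹ • z + ∑ n ∈ D, ε n • e n) := by
              rw [smul_add, smul_smul, mul_inv_cancel₀ (ne_of_gt hαpos), one_smul,
                Finset.smul_sum]
              congr 1
              exact Finset.sum_congr rfl fun n _ => (smul_smul α (ε n) (e n)).symm
            have hsc2 : z + ∑ n ∈ S, (α * δ n) • e n
                = α • (α⁻¹ • z + ∑ n ∈ S, δ n • e n) := by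
              rw [smul_add, smul_smul, mul_inv_cancel₀ (ne_of_gt hαpos), one_smul,
                Finset.smul_sum]
              congr 1
              exact Finset.sum_congr rfl fun n _ => (smul_smul α (δ n) (e n)).symm
            rw [hsc1, hMdef, hsc2]
            rw [norm_smul, norm_smul, Real.norm_eq_abs, abs_of_pos hαpos]
            calc α * ‖α⁻¹ • z + ∑ n ∈ D, ε n • e n‖
                ≤ α * (Δ * ‖α⁻¹ • z + ∑ n ∈ S, δ n • e n‖) :=
                  mul_le_mul_of_nonneg_left hrp (le_of_lt hαpos)
              _ = Δ * (α * ‖α⁻¹ • z + ∑ n ∈ S, δ n • e n‖) := by ring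
          have hcube : ‖z + ∑ n ∈ D, (f n x) • e n‖ ≤ M :=
            cube_lemma e α M hαpos D z (fun n => f n x) hMbound
              (fun n hn => hαout n (Finset.mem_sdiff.mp hn).2)
          have hSfy : ∀ n ∈ S, α ≤ |f n y| := by
            intro n hn
            rw [hyc n, if_neg (Finset.mem_sdiff.mp hn).2]
            exact hαin n (Finset.mem_sdiff.mp hn).1
          have hOstar : ∀ k, k ∉ S → k ∉ (∅ : Finset ℕ) →
              ∀ n ∈ S ∪ (∅ : Finset ℕ), |f k y| ≤ |f n y| := by
            intro k hk _ n hn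
            have hn' : n ∈ S := by simpa using hn
            have h1 : |f k y| ≤ α := by
              rw [hyc k]
              split
              · simpa using hα0
              · rename_i hkI
                exact hαout k (fun hkΛ => hk (Finset.mem_sdiff.mpr ⟨hkΛ, hkI⟩))
            exact le_trans h1 (hSfy n hn')
          have hconv := conv_lemma f e Cl hs y α hαpos S.card S ∅ 0 rfl
            (Finset.disjoint_empty_right S) hSfy (by simp) hOstar le_rfl zero_le_one
            (fun n hn => by simpa using hα0)
          have hmatch : z + ∑ n ∈ S, (α * δ n) • e n
              = y - proj f e S y + ∑ n ∈ S, (α * Real.sign (f n y)) • e n := by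
            rw [hzy]
            congr 1
            apply Finset.sum_congr rfl
            intro n hn
            have hne0 : f n y ≠ 0 := by
              intro h0
              have := hSfy n hn
              rw [h0, abs_zero] at this
              linarith
            rcases lt_or_gt_of_ne hne0 with hneg | hpos
            · rw [Real.sign_of_neg hneg]
              simp [hδdef, hneg]
            · rw [Real.sign_of_pos hpos]
              simp [hδdef, not_lt.mpr (le_of_lt hpos)]
          have hfinal : ‖z + ∑ n ∈ S, (α * δ n) • e n‖ ≤ Cl * ‖y‖ := by
            rw [hmatch]
            have h1 := hconv
            simp only [Finset.union_empty, zero_smul, sub_zero, sub_zero, one_mul] at h1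
            simpa using h1
          calc ‖x - proj f e Λ x‖ = ‖z + ∑ n ∈ D, (f n x) • e n‖ := by rw [hxsplit]
            _ ≤ M := hcube
            _ = Δ * ‖z + ∑ n ∈ S, (α * δ n) • e n‖ := hMdef
            _ ≤ Δ * (Cl * ‖y‖) := mul_le_mul_of_nonneg_left hfinal (by linarith)
            _ = (Cl * Δ) * ‖y‖ := by ring
  have hne : Set.Nonempty {r : ℝ | ∃ I : Finset ℕ,
      (I = ∅ ∨ ∃ a b : ℕ, a ≤ b ∧ I = Finset.Icc a b ∧ ∀ n ∈ Λ, n ≤ b) ∧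
      I.card ≤ m ∧ r = ‖x - proj f e I x‖} :=
    ⟨‖x‖, ∅, Or.inl rfl, Nat.zero_le m, by simp [proj]⟩
  have hC0 : (0:ℝ) < Cl * Δ := by nlinarith
  have hlow : ‖x - proj f e Λ x‖ / (Cl * Δ) ≤ checkSigma f e Λ m x := by
    apply le_csInf hne
    intro r hr
    rw [div_le_iff₀ hC0]
    calc ‖x - proj f e Λ x‖ ≤ (Cl * Δ) * r := key r hr
      _ = r * (Cl * Δ) := by ring
  calc ‖x - proj f e Λ x‖
      = ‖x - proj f e Λ x‖ / (Cl * Δ) * (Cl * Δ) := by field_simp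
    _ ≤ checkSigma f e Λ m x * (Cl * Δ) := by
        exact mul_le_mul_of_nonneg_right hlow (le_of_lt hC0)
    _ = Cl * Δ * checkSigma f e Λ m x := by ring
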